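/- arXiv:2302.12616 — 2 statements merged into one kernel-verified Lean document; each statement's English description precedes it below -/
import Mathlib

section
/- Let f_1,...,f_N, g_1,...,g_N, h be independent complex Gaussian random variables with f_n ~ CN(0, β_f), g_n ~ CN(0, β_g), h ~ CN(0, β_d). Then E[|Σ_{n=1}^N |f_n g_n| + |h||^2] = N^2 (π^2/16) β_f β_g + N(β_f β_g - (π^2/16) β_f β_g + (π^{3/2}/4)√(β_d β_f β_g)) + β_d. -/
open MeasureTheory ProbabilityTheory Real Filter

noncomputable def complexGaussian (v : ℝ) : Measure ℂ :=
  ((gaussianReal 0 (Real.toNNReal (v / 2))).prod (gaussianReal 0 (Real.toNNReal (v / 2)))).map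
    (fun p => Complex.equivRealProd.symm p)

section CGaux

lemma cg_fun_eq : (fun p : ℝ × ℝ => Complex.equivRealProd.symm p)
    = (Complex.measurableEquivRealProd.symm : ℝ × ℝ → ℂ) := rfl

instance cg_prob (v : ℝ) : IsProbabilityMeasure (complexGaussian v) := by
  unfold complexGaussian
  rw [cg_fun_eq]
  exact Measure.isProbabilityMeasure_map Complex.measurableEquivRealProd.symm.measurable.aemeasurable

lemma cg_zero : complexGaussian 0 = Measure.dirac 0 := by
  unfold complexGaussian
  rw [show Real.toNNReal ((0:ℝ) / 2) = 0 by simp, gaussianReal_zero_var,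
    Measure.dirac_prod_dirac, cg_fun_eq,
    Measure.map_dirac' Complex.measurableEquivRealProd.symm.measurable]
  exact congrArg Measure.dirac (Complex.ext rfl rfl)

lemma norm_symm_sq (p : ℝ × ℝ) :
    ‖(Complex.measurableEquivRealProd.symm p : ℂ)‖ ^ 2 = p.1 ^ 2 + p.2 ^ 2 := by
  have h1 : (Complex.measurableEquivRealProd.symm p : ℂ).re = p.1 := rfl
  have h2 : (Complex.measurableEquivRealProd.symm p : ℂ).im = p.2 := rfl
  rw [Complex.sq_norm, Complex.normSq_apply, h1, h2]
  ring

lemma norm_sq_eq (z : ℂ) : ‖z‖ ^ 2 = z.re ^ 2 + z.im ^ 2 := by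
  rw [Complex.sq_norm, Complex.normSq_apply]; ring

lemma sqrt_add_le_abs (x y : ℝ) : Real.sqrt (x ^ 2 + y ^ 2) ≤ |x| + |y| := by
  have h : x ^ 2 + y ^ 2 ≤ (|x| + |y|) ^ 2 := by
    have := abs_nonneg x; have := abs_nonneg y
    nlinarith [sq_abs x, sq_abs y, mul_nonneg (abs_nonneg x) (abs_nonneg y)]
  calc Real.sqrt (x ^ 2 + y ^ 2) ≤ Real.sqrt ((|x| + |y|) ^ 2) := Real.sqrt_le_sqrt h
  _ = |x| + |y| := Real.sqrt_sq (by positivity)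

lemma integrable_sq_exp {b : ℝ} (hb : 0 < b) :
    Integrable (fun x : ℝ => x ^ 2 * Real.exp (-b * x ^ 2)) := by
  have := integrable_rpow_mul_exp_neg_mul_sq hb (s := 2) (by norm_num)
  refine this.congr (ae_of_all _ fun x => ?_)
  simp [Real.rpow_two]

lemma integrable_abs_exp {b : ℝ} (hb : 0 < b) :
    Integrable (fun x : ℝ => |x| * Real.exp (-b * x ^ 2)) := by
  refine (integrable_mul_exp_neg_mul_sq hb).abs.congr (ae_of_all _ fun x => ?_)
  simp [abs_mul, abs_of_pos (Real.exp_pos _)]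

lemma integrable_norm_exp {b : ℝ} (hb : 0 < b) :
    Integrable (fun z : ℂ => ‖z‖ * Real.exp (-b * ‖z‖ ^ 2)) := by
  rw [← MeasurePreserving.integrable_comp_emb
    (Complex.volume_preserving_equiv_real_prod.symm)
    (Complex.measurableEquivRealProd.symm.measurableEmbedding)]
  have hcomp : ((fun z : ℂ => ‖z‖ * Real.exp (-b * ‖z‖ ^ 2)) ∘
      (Complex.measurableEquivRealProd.symm : ℝ × ℝ → ℂ)) =
      fun p : ℝ × ℝ => Real.sqrt (p.1 ^ 2 + p.2 ^ 2) *
        Real.exp (-b * (p.1 ^ 2 + p.2 ^ 2)) := by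
    funext p
    have h := norm_symm_sq p
    simp only [Function.comp_apply, h]
    congr 1
    rw [← h, Real.sqrt_sq (norm_nonneg _)]
  rw [hcomp]
  have hint : Integrable (fun p : ℝ × ℝ =>
      (|p.1| * Real.exp (-b * p.1 ^ 2)) * Real.exp (-b * p.2 ^ 2)
      + Real.exp (-b * p.1 ^ 2) * (|p.2| * Real.exp (-b * p.2 ^ 2))) volume := by
    rw [MeasureTheory.Measure.volume_eq_prod]
    exact ((integrable_abs_exp hb).mul_prod (integrable_exp_neg_mul_sq hb)).add
      ((integrable_exp_neg_mul_sq hb).mul_prod (integrable_abs_exp hb))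
  refine hint.mono' ?_ (ae_of_all _ fun p => ?_)
  · apply Continuous.aestronglyMeasurable
    fun_prop
  · have hexp : Real.exp (-b * (p.1 ^ 2 + p.2 ^ 2))
        = Real.exp (-b * p.1 ^ 2) * Real.exp (-b * p.2 ^ 2) := by
      rw [← Real.exp_add]; ring_nf
    rw [Real.norm_eq_abs, abs_mul, abs_of_pos (Real.exp_pos _),
      abs_of_nonneg (Real.sqrt_nonneg _), hexp]
    have h1 := sqrt_add_le_abs p.1 p.2
    have h2 : (0:ℝ) < Real.exp (-b * p.1 ^ 2) * Real.exp (-b * p.2 ^ 2) := by positivity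
    nlinarith [Real.exp_pos (-b * p.1 ^ 2), Real.exp_pos (-b * p.2 ^ 2),
      Real.sqrt_nonneg (p.1 ^ 2 + p.2 ^ 2)]

lemma integrable_normsq_exp {b : ℝ} (hb : 0 < b) :
    Integrable (fun z : ℂ => ‖z‖ ^ 2 * Real.exp (-b * ‖z‖ ^ 2)) := by
  rw [← MeasurePreserving.integrable_comp_emb
    (Complex.volume_preserving_equiv_real_prod.symm)
    (Complex.measurableEquivRealProd.symm.measurableEmbedding)]
  have hint : Integrable (fun p : ℝ × ℝ =>
      (p.1 ^ 2 * Real.exp (-b * p.1 ^ 2)) * Real.exp (-b * p.2 ^ 2)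
      + Real.exp (-b * p.1 ^ 2) * (p.2 ^ 2 * Real.exp (-b * p.2 ^ 2))) volume := by
    rw [MeasureTheory.Measure.volume_eq_prod]
    exact ((integrable_sq_exp hb).mul_prod (integrable_exp_neg_mul_sq hb)).add
      ((integrable_exp_neg_mul_sq hb).mul_prod (integrable_sq_exp hb))
  refine hint.congr (ae_of_all _ fun p => ?_)
  have h := norm_symm_sq p
  have hexp : Real.exp (-b * (p.1 ^ 2 + p.2 ^ 2))
      = Real.exp (-b * p.1 ^ 2) * Real.exp (-b * p.2 ^ 2) := by
    rw [← Real.exp_add]; ring_nf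
  simp only [Function.comp_apply, h, hexp]
  ring

/-- The product of the two gaussian densities equals the complex gaussian density. -/
lemma pdf_prod {v : ℝ} (hv : 0 < v) (z : ℂ) :
    gaussianPDFReal 0 (Real.toNNReal (v / 2)) z.re
      * gaussianPDFReal 0 (Real.toNNReal (v / 2)) z.im
      = (π * v)⁻¹ * Real.exp (-‖z‖ ^ 2 / v) := by
  have hw : ((v / 2).toNNReal : ℝ) = v / 2 :=
    Real.coe_toNNReal _ (by linarith)
  simp only [gaussianPDFReal_def, hw, sub_zero]
  have h2 : 2 * π * (v / 2) = π * v := by ring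
  have h3 : 2 * (v / 2) = v := by ring
  rw [h2, h3, norm_sq_eq z]
  rw [show -(z.re ^ 2 + z.im ^ 2) / v = -z.re ^ 2 / v + -z.im ^ 2 / v by ring,
    Real.exp_add]
  set s := Real.sqrt (π * v) with hsdef
  have hs : s * s = π * v := Real.mul_self_sqrt (by positivity)
  have hnz : s ≠ 0 := (Real.sqrt_pos.2 (by positivity)).ne'
  rw [← hs]
  field_simp

lemma cg_lintegral {v : ℝ} (hv : 0 < v) {φ : ℂ → ℝ} (hφ : Measurable φ) :
    ∫⁻ z, ENNReal.ofReal (φ z) ∂(complexGaussian v)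
      = ∫⁻ z : ℂ, ENNReal.ofReal (φ z * ((π * v)⁻¹ * Real.exp (-‖z‖ ^ 2 / v))) := by
  have hwne : Real.toNNReal (v / 2) ≠ 0 := by
    simp only [ne_eq, Real.toNNReal_eq_zero, not_le]
    linarith
  set w := Real.toNNReal (v / 2) with hwdef
  set d := gaussianPDF 0 w with hddef
  have hμ : gaussianReal 0 w = volume.withDensity d :=
    gaussianReal_of_var_ne_zero 0 hwne
  set e := Complex.measurableEquivRealProd with he
  have hd : Measurable d := measurable_gaussianPDF 0 w
  have hφ' : Measurable fun z : ℂ => ENNReal.ofReal (φ z) := hφ.ennreal_ofReal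
  have hF : Measurable fun p : ℝ × ℝ => ENNReal.ofReal (φ (e.symm p)) :=
    hφ'.comp e.symm.measurable
  unfold complexGaussian
  rw [cg_fun_eq, lintegral_map hφ' e.symm.measurable, hμ]
  calc
    ∫⁻ p, ENNReal.ofReal (φ (e.symm p))
        ∂((volume.withDensity d).prod (volume.withDensity d))
      = ∫⁻ x, ∫⁻ y, ENNReal.ofReal (φ (e.symm (x, y)))
          ∂(volume.withDensity d) ∂(volume.withDensity d) :=
        lintegral_prod _ hF.aemeasurable
    _ = ∫⁻ x, ∫⁻ y, d y * ENNReal.ofReal (φ (e.symm (x, y)))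
          ∂volume ∂(volume.withDensity d) := by
        refine lintegral_congr fun x => ?_
        rw [lintegral_withDensity_eq_lintegral_mul volume hd
          (show Measurable fun y : ℝ => ENNReal.ofReal (φ (e.symm (x, y))) from
            hF.comp measurable_prodMk_left)]
        exact lintegral_congr fun y => rfl
    _ = ∫⁻ x, d x * ∫⁻ y, d y * ENNReal.ofReal (φ (e.symm (x, y)))
          ∂volume ∂volume := by
        rw [lintegral_withDensity_eq_lintegral_mul volume hd
          (show Measurable fun x : ℝ =>
              ∫⁻ y, d y * ENNReal.ofReal (φ (e.symm (x, y))) ∂volume from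
            Measurable.lintegral_prod_right'
              ((hd.comp measurable_snd).mul hF))]
        exact lintegral_congr fun x => rfl
    _ = ∫⁻ x, ∫⁻ y, d x * (d y * ENNReal.ofReal (φ (e.symm (x, y))))
          ∂volume ∂volume := by
        refine lintegral_congr fun x => ?_
        rw [lintegral_const_mul _ (show Measurable fun y : ℝ =>
            d y * ENNReal.ofReal (φ (e.symm (x, y))) from
          (hd.comp measurable_id').mul (hF.comp measurable_prodMk_left))]
    _ = ∫⁻ p : ℝ × ℝ, d p.1 * (d p.2 * ENNReal.ofReal (φ (e.symm p)))
          ∂(volume.prod volume) :=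
        (lintegral_prod _ (((hd.comp measurable_fst).mul
          ((hd.comp measurable_snd).mul hF)).aemeasurable)).symm
    _ = ∫⁻ p : ℝ × ℝ, d p.1 * (d p.2 * ENNReal.ofReal (φ (e.symm p))) ∂volume := by
        rw [← MeasureTheory.Measure.volume_eq_prod]
    _ = ∫⁻ z : ℂ, d (e z).1 * (d (e z).2 * ENNReal.ofReal (φ (e.symm (e z)))) ∂volume :=
        (Complex.volume_preserving_equiv_real_prod.lintegral_comp
          ((hd.comp measurable_fst).mul ((hd.comp measurable_snd).mul hF))).symm
    _ = ∫⁻ z : ℂ, ENNReal.ofReal (φ z * ((π * v)⁻¹ * Real.exp (-‖z‖ ^ 2 / v))) := by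
        refine lintegral_congr fun z => ?_
        have hz : e.symm (e z) = z := e.symm_apply_apply z
        have hre : (e z).1 = z.re := rfl
        have him : (e z).2 = z.im := rfl
        rw [hz, hre, him, hddef, gaussianPDF_def]
        simp only
        rw [← ENNReal.ofReal_mul (gaussianPDFReal_nonneg _ _ _),
          ← ENNReal.ofReal_mul (gaussianPDFReal_nonneg _ _ _)]
        congr 1
        rw [← mul_assoc, pdf_prod hv z]
        ring

lemma cg_integral {v : ℝ} (hv : 0 < v) {φ : ℂ → ℝ} (hφm : Measurable φ)
    (hφ0 : ∀ z, 0 ≤ φ z) :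
    ∫ z, φ z ∂(complexGaussian v)
      = ∫ z : ℂ, φ z * ((π * v)⁻¹ * Real.exp (-‖z‖ ^ 2 / v)) := by
  rw [integral_eq_lintegral_of_nonneg_ae (ae_of_all _ hφ0) hφm.aestronglyMeasurable,
    integral_eq_lintegral_of_nonneg_ae
      (ae_of_all _ fun z => mul_nonneg (hφ0 z) (by positivity))
      ((hφm.mul (by fun_prop)).aestronglyMeasurable),
    cg_lintegral hv hφm]

lemma cg_integrable {v : ℝ} (hv : 0 < v) {φ : ℂ → ℝ} (hφm : Measurable φ)
    (hφ0 : ∀ z, 0 ≤ φ z)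
    (hint : Integrable (fun z : ℂ => φ z * ((π * v)⁻¹ * Real.exp (-‖z‖ ^ 2 / v))) volume) :
    Integrable φ (complexGaussian v) := by
  refine ⟨hφm.aestronglyMeasurable, ?_⟩
  rw [hasFiniteIntegral_iff_ofReal (ae_of_all _ hφ0), cg_lintegral hv hφm]
  exact hint.lintegral_lt_top

lemma density_rw {v : ℝ} (hv : 0 < v) (q : ℕ) (z : ℂ) :
    ‖z‖ ^ q * ((π * v)⁻¹ * Real.exp (-‖z‖ ^ 2 / v))
      = (π * v)⁻¹ * (‖z‖ ^ q * Real.exp (-v⁻¹ * ‖z‖ ^ 2)) := by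
  have : -‖z‖ ^ 2 / v = -v⁻¹ * ‖z‖ ^ 2 := by ring
  rw [this]; ring

lemma integrable_density_norm {v : ℝ} (hv : 0 < v) :
    Integrable (fun z : ℂ => ‖z‖ * ((π * v)⁻¹ * Real.exp (-‖z‖ ^ 2 / v))) volume := by
  refine ((integrable_norm_exp (inv_pos.2 hv)).const_mul ((π * v)⁻¹)).congr
    (ae_of_all _ fun z => ?_)
  have h := density_rw hv 1 z
  rw [pow_one] at h
  show (π * v)⁻¹ * (‖z‖ * Real.exp (-v⁻¹ * ‖z‖ ^ 2))
    = ‖z‖ * ((π * v)⁻¹ * Real.exp (-‖z‖ ^ 2 / v))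
  exact h.symm

lemma integrable_density_normsq {v : ℝ} (hv : 0 < v) :
    Integrable (fun z : ℂ => ‖z‖ ^ 2 * ((π * v)⁻¹ * Real.exp (-‖z‖ ^ 2 / v))) volume := by
  refine ((integrable_normsq_exp (inv_pos.2 hv)).const_mul ((π * v)⁻¹)).congr
    (ae_of_all _ fun z => ?_)
  show (π * v)⁻¹ * (‖z‖ ^ 2 * Real.exp (-v⁻¹ * ‖z‖ ^ 2))
    = ‖z‖ ^ 2 * ((π * v)⁻¹ * Real.exp (-‖z‖ ^ 2 / v))
  exact (density_rw hv 2 z).symm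

lemma gamma_three_halves : Real.Gamma (3 / 2) = Real.sqrt π / 2 := by
  rw [show (3 / 2 : ℝ) = 1 / 2 + 1 by norm_num, Real.Gamma_add_one (by norm_num),
    Real.Gamma_one_half_eq]
  ring

lemma cg_value_norm {v : ℝ} (hv : 0 < v) :
    ∫ z : ℂ, ‖z‖ * ((π * v)⁻¹ * Real.exp (-‖z‖ ^ 2 / v))
      = Real.sqrt π / 2 * Real.sqrt v := by
  have h1 : ∀ z : ℂ, ‖z‖ * ((π * v)⁻¹ * Real.exp (-‖z‖ ^ 2 / v))
      = (π * v)⁻¹ * (‖z‖ ^ (1 : ℝ) * Real.exp (-v⁻¹ * ‖z‖ ^ (2 : ℝ))) := by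
    intro z
    rw [Real.rpow_one, Real.rpow_two]
    have := density_rw hv 1 z
    rw [pow_one] at this
    rw [this]
  simp_rw [h1]
  rw [MeasureTheory.integral_const_mul,
    Complex.integral_rpow_mul_exp_neg_mul_rpow one_le_two (by norm_num) (inv_pos.2 hv)]
  have hb : (v⁻¹ : ℝ) ^ (-(1 + 2) / 2 : ℝ) = v ^ (3 / 2 : ℝ) := by
    rw [← Real.rpow_neg_one v, ← Real.rpow_mul hv.le]
    norm_num
  rw [show (1 + 2 : ℝ) / 2 = 3 / 2 by norm_num] at *
  rw [hb, gamma_three_halves]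
  have hv32 : v ^ (3 / 2 : ℝ) = v * Real.sqrt v := by
    rw [show (3 / 2 : ℝ) = 1 + 1 / 2 by norm_num, Real.rpow_add hv, Real.rpow_one,
      ← Real.sqrt_eq_rpow]
  rw [hv32]
  have hπ : π ≠ 0 := Real.pi_ne_zero
  have hvne : v ≠ 0 := hv.ne'
  field_simp

lemma cg_value_normsq {v : ℝ} (hv : 0 < v) :
    ∫ z : ℂ, ‖z‖ ^ 2 * ((π * v)⁻¹ * Real.exp (-‖z‖ ^ 2 / v)) = v := by
  have h1 : ∀ z : ℂ, ‖z‖ ^ 2 * ((π * v)⁻¹ * Real.exp (-‖z‖ ^ 2 / v))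
      = (π * v)⁻¹ * (‖z‖ ^ (2 : ℝ) * Real.exp (-v⁻¹ * ‖z‖ ^ (2 : ℝ))) := by
    intro z
    rw [Real.rpow_two, density_rw hv 2 z]
  simp_rw [h1]
  rw [MeasureTheory.integral_const_mul,
    Complex.integral_rpow_mul_exp_neg_mul_rpow one_le_two (by norm_num) (inv_pos.2 hv)]
  have hb : (v⁻¹ : ℝ) ^ (-(2 + 2) / 2 : ℝ) = v ^ 2 := by
    rw [← Real.rpow_neg_one v, ← Real.rpow_mul hv.le,
      show (-1 : ℝ) * (-(2 + 2) / 2) = 2 by norm_num, Real.rpow_two]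
  rw [hb, show (2 + 2 : ℝ) / 2 = 2 by norm_num, Real.Gamma_two]
  have hπ : π ≠ 0 := Real.pi_ne_zero
  have hvne : v ≠ 0 := hv.ne'
  field_simp

lemma cg_integral_norm {v : ℝ} (hv : 0 ≤ v) :
    ∫ z, ‖z‖ ∂(complexGaussian v) = Real.sqrt π / 2 * Real.sqrt v := by
  rcases eq_or_lt_of_le hv with h | h
  · rw [← h, cg_zero, integral_dirac]
    simp
  · rw [cg_integral h measurable_norm (fun z => norm_nonneg z), cg_value_norm h]

lemma cg_integral_normsq {v : ℝ} (hv : 0 ≤ v) :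
    ∫ z, ‖z‖ ^ 2 ∂(complexGaussian v) = v := by
  rcases eq_or_lt_of_le hv with h | h
  · rw [← h, cg_zero, integral_dirac]
    simp
  · rw [cg_integral h (measurable_norm.pow_const 2)
      (fun z => by positivity), cg_value_normsq h]

lemma integrable_dirac' {f : ℂ → ℝ} (hm : Measurable f) :
    Integrable f (Measure.dirac (0 : ℂ)) := by
  refine ⟨hm.aestronglyMeasurable, ?_⟩
  rw [HasFiniteIntegral, lintegral_dirac' _ (by fun_prop)]
  exact ENNReal.coe_lt_top

lemma cg_integrable_norm {v : ℝ} (hv : 0 ≤ v) :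
    Integrable (fun z : ℂ => ‖z‖) (complexGaussian v) := by
  rcases eq_or_lt_of_le hv with h | h
  · rw [← h, cg_zero]; exact integrable_dirac' measurable_norm
  · exact cg_integrable h measurable_norm (fun z => norm_nonneg z)
      (integrable_density_norm h)

lemma cg_integrable_normsq {v : ℝ} (hv : 0 ≤ v) :
    Integrable (fun z : ℂ => ‖z‖ ^ 2) (complexGaussian v) := by
  rcases eq_or_lt_of_le hv with h | h
  · rw [← h, cg_zero]; exact integrable_dirac' (measurable_norm.pow_const 2)
  · exact cg_integrable h (measurable_norm.pow_const 2) (fun z => by positivity)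
      (integrable_density_normsq h)

end CGaux

section OmegaAux

variable {Ω : Type*} [MeasurableSpace Ω] {P : Measure Ω}

lemma aux_int_norm {X : Ω → ℂ} {v : ℝ} (hv : 0 ≤ v)
    (hXm : AEMeasurable X P) (hmap : P.map X = complexGaussian v) :
    Integrable (fun ω => ‖X ω‖) P := by
  have h1 := cg_integrable_norm hv
  rw [← hmap] at h1
  exact (integrable_map_measure h1.aestronglyMeasurable hXm).mp h1

lemma aux_val_norm {X : Ω → ℂ} {v : ℝ} (hv : 0 ≤ v)
    (hXm : AEMeasurable X P) (hmap : P.map X = complexGaussian v) :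
    ∫ ω, ‖X ω‖ ∂P = Real.sqrt π / 2 * Real.sqrt v := by
  rw [← cg_integral_norm hv, ← hmap,
    integral_map hXm measurable_norm.aestronglyMeasurable]

lemma aux_int_normsq {X : Ω → ℂ} {v : ℝ} (hv : 0 ≤ v)
    (hXm : AEMeasurable X P) (hmap : P.map X = complexGaussian v) :
    Integrable (fun ω => ‖X ω‖ ^ 2) P := by
  have h1 := cg_integrable_normsq hv
  rw [← hmap] at h1
  exact (integrable_map_measure h1.aestronglyMeasurable hXm).mp h1

lemma aux_val_normsq {X : Ω → ℂ} {v : ℝ} (hv : 0 ≤ v)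
    (hXm : AEMeasurable X P) (hmap : P.map X = complexGaussian v) :
    ∫ ω, ‖X ω‖ ^ 2 ∂P = v := by
  rw [← cg_integral_normsq hv, ← hmap,
    integral_map hXm (measurable_norm.pow_const 2).aestronglyMeasurable]

lemma iIndepFun_ae_eq {ι : Type*} {β : ι → Type*}
    {m : ∀ i, MeasurableSpace (β i)} {F F' : ∀ i, Ω → β i}
    (hindep : iIndepFun (m := m) F P) (hae : ∀ i, F i =ᵐ[P] F' i) : iIndepFun (m := m) F' P := by
  rw [iIndepFun_iff_measure_inter_preimage_eq_mul] at hindep ⊢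
  intro S sets hsets
  have hS : ∀ᵐ ω ∂P, ∀ i ∈ S, F i ω = F' i ω :=
    (Filter.eventually_all_finset S).2 fun i _ => hae i
  have h2 : P (⋂ i ∈ S, F' i ⁻¹' sets i) = P (⋂ i ∈ S, F i ⁻¹' sets i) := by
    apply measure_congr
    filter_upwards [hS] with ω hω
    have : (ω ∈ ⋂ i ∈ S, F' i ⁻¹' sets i) = (ω ∈ ⋂ i ∈ S, F i ⁻¹' sets i) := by
      rw [eq_iff_iff]
      simp only [Set.mem_iInter, Set.mem_preimage]
      exact ⟨fun H i hi => by rw [hω i hi]; exact H i hi,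
        fun H i hi => by rw [← hω i hi]; exact H i hi⟩
    exact this
  rw [h2, hindep S hsets]
  refine Finset.prod_congr rfl fun i hi => ?_
  apply measure_congr
  filter_upwards [hae i] with ω hω
  have : (ω ∈ F i ⁻¹' sets i) = (ω ∈ F' i ⁻¹' sets i) := by
    rw [eq_iff_iff, Set.mem_preimage, Set.mem_preimage, hω]
  exact this

end OmegaAux

theorem cg_main {Ω : Type*} [MeasurableSpace Ω] (P : Measure Ω) [IsProbabilityMeasure P]
    (N : ℕ) (βf βg βd : ℝ) (hβf : 0 ≤ βf) (hβg : 0 ≤ βg) (hβd : 0 ≤ βd)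
    (f g : Fin N → Ω → ℂ) (h : Ω → ℂ)
    (hfm : ∀ n, Measurable (f n)) (hgm : ∀ n, Measurable (g n)) (hhm : Measurable h)
    (hf : ∀ n, P.map (f n) = complexGaussian βf)
    (hg : ∀ n, P.map (g n) = complexGaussian βg)
    (hh : P.map h = complexGaussian βd)
    (hindep : iIndepFun
      (Sum.elim (Sum.elim f g) (fun _ : Unit => h)) P) :
    ∫ ω, (∑ n, ‖f n ω‖ * ‖g n ω‖ + ‖h ω‖) ^ 2 ∂P =
      (N : ℝ) ^ 2 * (π ^ 2 / 16) * (βf * βg) +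
        (N : ℝ) * (βf * βg - (π ^ 2 / 16) * (βf * βg) +
          (π ^ (3 / 2 : ℝ) / 4) * Real.sqrt (βd * (βf * βg))) + βd := by
  classical
  have hFm : ∀ i, Measurable ((Sum.elim (Sum.elim f g) fun _ : Unit => h) i) := by
    rintro ((n | n) | u)
    exacts [hfm n, hgm n, hhm]
  -- base moments
  have hIf : ∀ n, Integrable (fun ω => ‖f n ω‖) P :=
    fun n => aux_int_norm hβf (hfm n).aemeasurable (hf n)
  have hIg : ∀ n, Integrable (fun ω => ‖g n ω‖) P :=
    fun n => aux_int_norm hβg (hgm n).aemeasurable (hg n)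
  have hIh : Integrable (fun ω => ‖h ω‖) P := aux_int_norm hβd hhm.aemeasurable hh
  have hIf2 : ∀ n, Integrable (fun ω => ‖f n ω‖ ^ 2) P :=
    fun n => aux_int_normsq hβf (hfm n).aemeasurable (hf n)
  have hIg2 : ∀ n, Integrable (fun ω => ‖g n ω‖ ^ 2) P :=
    fun n => aux_int_normsq hβg (hgm n).aemeasurable (hg n)
  have hIh2 : Integrable (fun ω => ‖h ω‖ ^ 2) P := aux_int_normsq hβd hhm.aemeasurable hh
  have hEf : ∀ n, ∫ ω, ‖f n ω‖ ∂P = Real.sqrt π / 2 * Real.sqrt βf :=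
    fun n => aux_val_norm hβf (hfm n).aemeasurable (hf n)
  have hEg : ∀ n, ∫ ω, ‖g n ω‖ ∂P = Real.sqrt π / 2 * Real.sqrt βg :=
    fun n => aux_val_norm hβg (hgm n).aemeasurable (hg n)
  have hEh : ∫ ω, ‖h ω‖ ∂P = Real.sqrt π / 2 * Real.sqrt βd :=
    aux_val_norm hβd hhm.aemeasurable hh
  have hEf2 : ∀ n, ∫ ω, ‖f n ω‖ ^ 2 ∂P = βf :=
    fun n => aux_val_normsq hβf (hfm n).aemeasurable (hf n)
  have hEg2 : ∀ n, ∫ ω, ‖g n ω‖ ^ 2 ∂P = βg :=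
    fun n => aux_val_normsq hβg (hgm n).aemeasurable (hg n)
  have hEh2 : ∫ ω, ‖h ω‖ ^ 2 ∂P = βd := aux_val_normsq hβd hhm.aemeasurable hh
  -- independence
  have hind_fg : ∀ n : Fin N, IndepFun (fun ω => ‖f n ω‖) (fun ω => ‖g n ω‖) P := fun n =>
    (hindep.indepFun (show (Sum.inl (Sum.inl n) : (Fin N ⊕ Fin N) ⊕ Unit)
      ≠ Sum.inl (Sum.inr n) by simp)).comp measurable_norm measurable_norm
  have hind_fg2 : ∀ n : Fin N, IndepFun (fun ω => ‖f n ω‖ ^ 2) (fun ω => ‖g n ω‖ ^ 2) P :=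
    fun n => (hindep.indepFun (show (Sum.inl (Sum.inl n) : (Fin N ⊕ Fin N) ⊕ Unit)
      ≠ Sum.inl (Sum.inr n) by simp)).comp
        (measurable_norm.pow_const 2) (measurable_norm.pow_const 2)
  have hmnorms : Measurable fun p : ℂ × ℂ => ‖p.1‖ * ‖p.2‖ :=
    measurable_fst.norm.mul measurable_snd.norm
  have hind_AA : ∀ n m : Fin N, n ≠ m →
      IndepFun (fun ω => ‖f n ω‖ * ‖g n ω‖) (fun ω => ‖f m ω‖ * ‖g m ω‖) P := by
    intro n m hnm
    have h1 := hindep.indepFun_prodMk_prodMk hFm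
      (Sum.inl (Sum.inl n)) (Sum.inl (Sum.inr n))
      (Sum.inl (Sum.inl m)) (Sum.inl (Sum.inr m))
      (by simp [hnm]) (by simp) (by simp) (by simp [hnm])
    exact h1.comp hmnorms hmnorms
  have hind_AB : ∀ n : Fin N,
      IndepFun (fun ω => ‖f n ω‖ * ‖g n ω‖) (fun ω => ‖h ω‖) P := by
    intro n
    have h1 := hindep.indepFun_prodMk hFm
      (Sum.inl (Sum.inl n)) (Sum.inl (Sum.inr n)) (Sum.inr ())
      (by simp) (by simp)
    exact h1.comp hmnorms measurable_norm
  -- product integrability and expectations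
  have hIA : ∀ n, Integrable (fun ω => ‖f n ω‖ * ‖g n ω‖) P :=
    fun n => (hind_fg n).integrable_mul (hIf n) (hIg n)
  have hEA : ∀ n, ∫ ω, ‖f n ω‖ * ‖g n ω‖ ∂P
      = (Real.sqrt π / 2 * Real.sqrt βf) * (Real.sqrt π / 2 * Real.sqrt βg) := by
    intro n
    have h1 := (hind_fg n).integral_fun_mul_eq_mul_integral (hIf n).aestronglyMeasurable (hIg n).aestronglyMeasurable
    rw [hEf n, hEg n] at h1
    exact h1
  have hEA2 : ∀ n, ∫ ω, (‖f n ω‖ * ‖g n ω‖) * (‖f n ω‖ * ‖g n ω‖) ∂P = βf * βg := by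
    intro n
    have h1 := (hind_fg2 n).integral_fun_mul_eq_mul_integral (hIf2 n).aestronglyMeasurable (hIg2 n).aestronglyMeasurable
    rw [hEf2 n, hEg2 n] at h1
    rw [← h1]
    refine integral_congr_ae (ae_of_all _ fun ω => ?_)
    show (‖f n ω‖ * ‖g n ω‖) * (‖f n ω‖ * ‖g n ω‖) = ‖f n ω‖ ^ 2 * ‖g n ω‖ ^ 2
    ring
  have hIAA : ∀ n m, Integrable (fun ω => (‖f n ω‖ * ‖g n ω‖) * (‖f m ω‖ * ‖g m ω‖)) P := by
    intro n m
    by_cases hnm : n = m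
    · subst hnm
      refine (((hind_fg2 n).integrable_mul (hIf2 n) (hIg2 n))).congr
        (ae_of_all _ fun ω => ?_)
      show ‖f n ω‖ ^ 2 * ‖g n ω‖ ^ 2 = (‖f n ω‖ * ‖g n ω‖) * (‖f n ω‖ * ‖g n ω‖)
      ring
    · exact (hind_AA n m hnm).integrable_mul (hIA n) (hIA m)
  have hEAA : ∀ n m, ∫ ω, (‖f n ω‖ * ‖g n ω‖) * (‖f m ω‖ * ‖g m ω‖) ∂P
      = if n = m then βf * βg
        else ((Real.sqrt π / 2 * Real.sqrt βf) * (Real.sqrt π / 2 * Real.sqrt βg)) ^ 2 := by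
    intro n m
    by_cases hnm : n = m
    · subst hnm
      rw [if_pos rfl]
      exact hEA2 n
    · rw [if_neg hnm]
      have h1 := (hind_AA n m hnm).integral_fun_mul_eq_mul_integral (hIA n).aestronglyMeasurable (hIA m).aestronglyMeasurable
      rw [hEA n, hEA m] at h1
      rw [sq]
      exact h1
  have hIAB : ∀ n, Integrable (fun ω => (‖f n ω‖ * ‖g n ω‖) * ‖h ω‖) P :=
    fun n => (hind_AB n).integrable_mul (hIA n) hIh
  have hEAB : ∀ n, ∫ ω, (‖f n ω‖ * ‖g n ω‖) * ‖h ω‖ ∂P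
      = ((Real.sqrt π / 2 * Real.sqrt βf) * (Real.sqrt π / 2 * Real.sqrt βg))
        * (Real.sqrt π / 2 * Real.sqrt βd) := by
    intro n
    have h1 := (hind_AB n).integral_fun_mul_eq_mul_integral (hIA n).aestronglyMeasurable hIh.aestronglyMeasurable
    rw [hEA n, hEh] at h1
    exact h1
  have hIBB : Integrable (fun ω => ‖h ω‖ * ‖h ω‖) P :=
    hIh2.congr (ae_of_all _ fun ω => pow_two (‖h ω‖))
  have hEBB : ∫ ω, ‖h ω‖ * ‖h ω‖ ∂P = βd := by
    rw [← hEh2]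
    exact integral_congr_ae (ae_of_all _ fun ω => (pow_two (‖h ω‖)).symm)
  -- expansion of the square
  have hstep1 : ∫ ω, (∑ n, ‖f n ω‖ * ‖g n ω‖ + ‖h ω‖) ^ 2 ∂P
      = ∫ ω, ((∑ n, ∑ m, (‖f n ω‖ * ‖g n ω‖) * (‖f m ω‖ * ‖g m ω‖))
          + (2 * ∑ n, (‖f n ω‖ * ‖g n ω‖) * ‖h ω‖ + ‖h ω‖ * ‖h ω‖)) ∂P := by
    refine integral_congr_ae (ae_of_all _ fun ω => ?_)
    beta_reduce
    rw [← Finset.sum_mul_sum Finset.univ Finset.univ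
      (fun n => ‖f n ω‖ * ‖g n ω‖) (fun m => ‖f m ω‖ * ‖g m ω‖),
      ← Finset.sum_mul]
    ring
  have hInt1 : Integrable
      (fun ω => ∑ n, ∑ m, (‖f n ω‖ * ‖g n ω‖) * (‖f m ω‖ * ‖g m ω‖)) P :=
    integrable_finset_sum _ fun n _ => integrable_finset_sum _ fun m _ => hIAA n m
  have hInt21 : Integrable (fun ω => 2 * ∑ n, (‖f n ω‖ * ‖g n ω‖) * ‖h ω‖) P :=
    (integrable_finset_sum _ fun n _ => hIAB n).const_mul 2
  have hstep2 : ∫ ω, ((∑ n, ∑ m, (‖f n ω‖ * ‖g n ω‖) * (‖f m ω‖ * ‖g m ω‖))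
          + (2 * ∑ n, (‖f n ω‖ * ‖g n ω‖) * ‖h ω‖ + ‖h ω‖ * ‖h ω‖)) ∂P
      = (∑ n, ∑ m, ∫ ω, (‖f n ω‖ * ‖g n ω‖) * (‖f m ω‖ * ‖g m ω‖) ∂P)
        + (2 * ∑ n, ∫ ω, (‖f n ω‖ * ‖g n ω‖) * ‖h ω‖ ∂P + ∫ ω, ‖h ω‖ * ‖h ω‖ ∂P) := by
    calc ∫ ω, ((∑ n, ∑ m, (‖f n ω‖ * ‖g n ω‖) * (‖f m ω‖ * ‖g m ω‖))
          + (2 * ∑ n, (‖f n ω‖ * ‖g n ω‖) * ‖h ω‖ + ‖h ω‖ * ‖h ω‖)) ∂P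
        = (∫ ω, ∑ n, ∑ m, (‖f n ω‖ * ‖g n ω‖) * (‖f m ω‖ * ‖g m ω‖) ∂P)
          + ∫ ω, (2 * ∑ n, (‖f n ω‖ * ‖g n ω‖) * ‖h ω‖ + ‖h ω‖ * ‖h ω‖) ∂P :=
        integral_add hInt1 (hInt21.add hIBB)
      _ = (∑ n, ∑ m, ∫ ω, (‖f n ω‖ * ‖g n ω‖) * (‖f m ω‖ * ‖g m ω‖) ∂P)
        + (2 * ∑ n, ∫ ω, (‖f n ω‖ * ‖g n ω‖) * ‖h ω‖ ∂P + ∫ ω, ‖h ω‖ * ‖h ω‖ ∂P) := by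
        rw [integral_add hInt21 hIBB,
          integral_finset_sum _ fun n _ => integrable_finset_sum _ fun m _ => hIAA n m,
          MeasureTheory.integral_const_mul,
          integral_finset_sum _ fun n _ => hIAB n]
        congr 1
        refine Finset.sum_congr rfl fun n _ => ?_
        exact integral_finset_sum _ fun m _ => hIAA n m
  -- sums
  have hsum1 : (∑ n : Fin N, ∑ m : Fin N,
      ∫ ω, (‖f n ω‖ * ‖g n ω‖) * (‖f m ω‖ * ‖g m ω‖) ∂P)
      = (N : ℝ) * ((N : ℝ) *
          ((Real.sqrt π / 2 * Real.sqrt βf) * (Real.sqrt π / 2 * Real.sqrt βg)) ^ 2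
        + (βf * βg
          - ((Real.sqrt π / 2 * Real.sqrt βf) * (Real.sqrt π / 2 * Real.sqrt βg)) ^ 2)) := by
    set K2 := ((Real.sqrt π / 2 * Real.sqrt βf) * (Real.sqrt π / 2 * Real.sqrt βg)) ^ 2
      with hK2
    have inner : ∀ n : Fin N, (∑ m : Fin N,
        ∫ ω, (‖f n ω‖ * ‖g n ω‖) * (‖f m ω‖ * ‖g m ω‖) ∂P)
        = (N : ℝ) * K2 + (βf * βg - K2) := by
      intro n
      have hterm : ∀ m : Fin N, ∫ ω, (‖f n ω‖ * ‖g n ω‖) * (‖f m ω‖ * ‖g m ω‖) ∂P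
          = K2 + (if n = m then βf * βg - K2 else 0) := by
        intro m
        rw [hEAA n m]
        by_cases hnm : n = m <;> simp [hnm]
      simp_rw [hterm]
      rw [Finset.sum_add_distrib, Finset.sum_const,
        Finset.sum_ite_eq Finset.univ n (fun _ => βf * βg - K2)]
      simp [Finset.card_univ, nsmul_eq_mul]
    simp_rw [inner]
    rw [Finset.sum_const]
    simp only [Finset.card_univ, Fintype.card_fin, nsmul_eq_mul]
  have hsum2 : (∑ n : Fin N, ∫ ω, (‖f n ω‖ * ‖g n ω‖) * ‖h ω‖ ∂P)
      = (N : ℝ) * (((Real.sqrt π / 2 * Real.sqrt βf) * (Real.sqrt π / 2 * Real.sqrt βg))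
        * (Real.sqrt π / 2 * Real.sqrt βd)) := by
    simp_rw [hEAB]
    rw [Finset.sum_const]
    simp [Finset.card_univ, nsmul_eq_mul]
  rw [hstep1, hstep2, hsum1, hsum2, hEBB]
  -- final algebra
  have hsqrt : Real.sqrt (βd * (βf * βg))
      = Real.sqrt βd * (Real.sqrt βf * Real.sqrt βg) := by
    rw [Real.sqrt_mul hβd, Real.sqrt_mul hβf]
  have hrpow : π ^ (3 / 2 : ℝ) = π * Real.sqrt π := by
    rw [show (3 / 2 : ℝ) = 1 + 1 / 2 by norm_num, Real.rpow_add Real.pi_pos,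
      Real.rpow_one, ← Real.sqrt_eq_rpow]
  rw [hrpow, hsqrt]
  set t := Real.sqrt π with htdef
  set sf := Real.sqrt βf with hsfdef
  set sg := Real.sqrt βg with hsgdef
  set sd := Real.sqrt βd with hsddef
  have ht : t * t = π := Real.mul_self_sqrt Real.pi_pos.le
  have hsf : sf * sf = βf := Real.mul_self_sqrt hβf
  have hsg : sg * sg = βg := Real.mul_self_sqrt hβg
  have hsd : sd * sd = βd := Real.mul_self_sqrt hβd
  rw [← ht, ← hsf, ← hsg, ← hsd]
  ring

theorem stmt0 {Ω : Type*} [MeasurableSpace Ω] (P : Measure Ω) [IsProbabilityMeasure P]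
    (N : ℕ) (βf βg βd : ℝ) (hβf : 0 ≤ βf) (hβg : 0 ≤ βg) (hβd : 0 ≤ βd)
    (f g : Fin N → Ω → ℂ) (h : Ω → ℂ)
    (hf : ∀ n, P.map (f n) = complexGaussian βf)
    (hg : ∀ n, P.map (g n) = complexGaussian βg)
    (hh : P.map h = complexGaussian βd)
    (hindep : iIndepFun
      (Sum.elim (Sum.elim f g) (fun _ : Unit => h)) P) :
    ∫ ω, (∑ n, ‖f n ω * g n ω‖ + ‖h ω‖) ^ 2 ∂P =
      (N : ℝ) ^ 2 * (π ^ 2 / 16) * (βf * βg) +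
        (N : ℝ) * (βf * βg - (π ^ 2 / 16) * (βf * βg) +
          (π ^ (3 / 2 : ℝ) / 4) * Real.sqrt (βd * (βf * βg))) + βd := by
  classical
  have hne : ∀ v : ℝ, complexGaussian v ≠ 0 := by
    intro v hc
    have h1 : (complexGaussian v) Set.univ = 1 := measure_univ
    rw [hc] at h1
    simp at h1
  have haef : ∀ n, AEMeasurable (f n) P := by
    intro n
    by_contra hc
    exact hne βf (by rw [← hf n, Measure.map_of_not_aemeasurable hc])
  have haeg : ∀ n, AEMeasurable (g n) P := by
    intro n
    by_contra hc
    exact hne βg (by rw [← hg n, Measure.map_of_not_aemeasurable hc])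
  have haeh : AEMeasurable h P := by
    by_contra hc
    exact hne βd (by rw [← hh, Measure.map_of_not_aemeasurable hc])
  set f' : Fin N → Ω → ℂ := fun n => (haef n).mk _ with hf'def
  set g' : Fin N → Ω → ℂ := fun n => (haeg n).mk _ with hg'def
  set h' : Ω → ℂ := haeh.mk _ with hh'def
  have hfae : ∀ n, f n =ᵐ[P] f' n := fun n => (haef n).ae_eq_mk
  have hgae : ∀ n, g n =ᵐ[P] g' n := fun n => (haeg n).ae_eq_mk
  have hhae : h =ᵐ[P] h' := haeh.ae_eq_mk
  have hf'm : ∀ n, Measurable (f' n) := fun n => (haef n).measurable_mk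
  have hg'm : ∀ n, Measurable (g' n) := fun n => (haeg n).measurable_mk
  have hh'm : Measurable h' := haeh.measurable_mk
  have hf' : ∀ n, P.map (f' n) = complexGaussian βf := fun n => by
    rw [← Measure.map_congr (hfae n)]; exact hf n
  have hg' : ∀ n, P.map (g' n) = complexGaussian βg := fun n => by
    rw [← Measure.map_congr (hgae n)]; exact hg n
  have hh' : P.map h' = complexGaussian βd := by
    rw [← Measure.map_congr hhae]; exact hh
  have hindep' : iIndepFun
      (Sum.elim (Sum.elim f' g') (fun _ : Unit => h')) P := by
    refine iIndepFun_ae_eq hindep ?_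
    rintro ((n | n) | u)
    exacts [hfae n, hgae n, hhae]
  have hmain := cg_main P N βf βg βd hβf hβg hβd f' g' h' hf'm hg'm hh'm hf' hg' hh' hindep'
  rw [← hmain]
  refine integral_congr_ae ?_
  filter_upwards [ae_all_iff.2 hfae, ae_all_iff.2 hgae, hhae] with ω h1 h2 h3
  have hterm : ∀ n, ‖f n ω * g n ω‖ = ‖f' n ω‖ * ‖g' n ω‖ := by
    intro n
    rw [h1 n, h2 n, norm_mul]
  rw [h3]
  congr 1
  congr 1
  exact Finset.sum_congr rfl fun n _ => hterm n
end

section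
/- Fix β_d > 0 and β̃ > 0. For N ∈ ℕ let F̄_N(z) denote the CCDF: F̄_N(z) = 1 − (1/(Nβ̃+2)) e^{z/β_d} for z < 0 and F̄_N(z) = ((Nβ̃+1)/(Nβ̃+2)) e^{−z/(β_d(1+Nβ̃))} for z ≥ 0. Then for all M > N ≥ 1 and all z ∈ ℝ, F̄_M(z) ≥ F̄_N(z); i.e., the family {Z_N} is stochastically increasing in N. -/
open MeasureTheory ProbabilityTheory Real Filter

theorem stmt10 (βd βt : ℝ) (hβd : 0 < βd) (hβt : 0 < βt) (F : ℕ → ℝ → ℝ)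
    (hF : ∀ N z, F N z = if z < 0 then 1 - (1 / ((N : ℝ) * βt + 2)) * Real.exp (z / βd)
      else (((N : ℝ) * βt + 1) / ((N : ℝ) * βt + 2)) *
        Real.exp (-z / (βd * (1 + (N : ℝ) * βt)))) :
    ∀ M N : ℕ, 1 ≤ N → N < M → ∀ z : ℝ, F N z ≤ F M z := by
  intro M N hN hNM z
  have hNle : (N : ℝ) ≤ (M : ℝ) := Nat.cast_le.mpr hNM.le
  have hNn : (0:ℝ) ≤ (N:ℝ) := Nat.cast_nonneg _
  have hMn : (0:ℝ) ≤ (M:ℝ) := Nat.cast_nonneg _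
  have hdN : (0:ℝ) < (N:ℝ) * βt + 2 := by positivity
  have hdM : (0:ℝ) < (M:ℝ) * βt + 2 := by positivity
  have heN : (0:ℝ) < βd * (1 + (N:ℝ) * βt) := by positivity
  have heM : (0:ℝ) < βd * (1 + (M:ℝ) * βt) := by positivity
  rw [hF, hF]
  split_ifs with h
  · have h1 : 1 / ((M:ℝ) * βt + 2) ≤ 1 / ((N:ℝ) * βt + 2) := by
      apply one_div_le_one_div_of_le hdN
      nlinarith
    nlinarith [Real.exp_pos (z / βd)]
  · push_neg at h
    apply mul_le_mul
    · rw [div_le_div_iff₀ hdN hdM]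
      nlinarith
    · apply Real.exp_le_exp.mpr
      rw [div_le_div_iff₀ heN heM]
      nlinarith [mul_nonneg (mul_nonneg (mul_nonneg h hβd.le) hβt.le)
        (sub_nonneg.mpr hNle)]
    · positivity
    · positivity
end
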